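/- Let F : C ⥤ D be a functor between small categories and A a dependent presheaf over F^* X' for some presheaf X' on D. Define (F_† A)(Γ', x') to be the set of families α assigning to each Γ : C and δ' : D(F Γ ⟶ Γ') an element of A(Γ, x'[δ']), natural in Γ. Then sections of A over F^* X' are in natural bijection with sections of F_† A over X'; i.e., F_* extends to a dependent right adjoint of F^*. -/
import Mathlib

open CategoryTheory Opposite

universe u

variable {C D : Type u} [SmallCategory C] [SmallCategory D]

/-- Sections of a dependent presheaf `A` over a presheaf `Z` (encoded as a functor on the
category of elements of `Z`): natural families of elements. -/
def Sect {E : Type u} [SmallCategory E] {Z : Eᵒᵖ ⥤ Type u} (A : Z.Elements ⥤ Type u) :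
    Type u :=
  {s : ∀ e : Z.Elements, A.obj e // ∀ (e e' : Z.Elements) (f : e ⟶ e'), A.map f (s e) = s e'}

/-- The value of the dependent presheaf `F_† A` at an element `(Γ', x')` of `X'`: natural
families `α` assigning to each `Γ : C` and `δ' : F Γ ⟶ Γ'` an element of `A (Γ, x'[δ'])`. -/
def FdagSet (F : C ⥤ D) (X' : Dᵒᵖ ⥤ Type u) (A : (F.op ⋙ X').Elements ⥤ Type u)
    (v : X'.Elements) : Type u :=
  {α : ∀ (Γ : C) (δ' : F.obj Γ ⟶ v.1.unop),
      A.obj ((F.op ⋙ X').elementsMk (op Γ) (X'.map δ'.op v.2)) //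
    ∀ (Γ Δ : C) (σ : Γ ⟶ Δ) (δ' : F.obj Δ ⟶ v.1.unop),
      A.map (⟨σ.op, by
          show X'.map (F.map σ).op (X'.map δ'.op v.2) = X'.map (F.map σ ≫ δ').op v.2
          rw [op_comp, FunctorToTypes.map_comp_apply]⟩ :
        (F.op ⋙ X').elementsMk (op Δ) (X'.map δ'.op v.2) ⟶
          (F.op ⋙ X').elementsMk (op Γ) (X'.map (F.map σ ≫ δ').op v.2))
        (α Δ δ') = α Γ (F.map σ ≫ δ')}

section helpers

variable {E : Type u} [SmallCategory E]

lemma map_map (A : E ⥤ Type u) {e e' e'' : E} (f : e ⟶ e') (g : e' ⟶ e'') (x : A.obj e) :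
    A.map g (A.map f x) = A.map (f ≫ g) x := (FunctorToTypes.map_comp_apply A f g x).symm

lemma elements_eqToHom_val {Z : Eᵒᵖ ⥤ Type u} {x y : Z.Elements} (h : x = y) :
    (eqToHom h).1 = eqToHom (congrArg Sigma.fst h) := by subst h; rfl

lemma map_congr' (A : E ⥤ Type u) {e e' : E} {f g : e ⟶ e'} (h : f = g) (x : A.obj e) :
    A.map f x = A.map g x := by rw [h]

end helpers

lemma alpha_cong (F : C ⥤ D) (X' : Dᵒᵖ ⥤ Type u) (A : (F.op ⋙ X').Elements ⥤ Type u)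
    {v : X'.Elements} (α : FdagSet F X' A v) {Γ : C} {δ₁ δ₂ : F.obj Γ ⟶ v.1.unop}
    (h : δ₁ = δ₂) :
    α.1 Γ δ₂ = A.map (eqToHom (by rw [h])) (α.1 Γ δ₁) := by
  subst h; simp

/-- Dependent right adjoint to `F^*`: for a dependent presheaf `A` over `F^* X'`, sections
of `A` over `F^* X'` are in natural bijection with sections over `X'` of the dependent
presheaf `F_† A`, i.e. `F_*` extends to a dependent right adjoint of `F^*`. -/
theorem sections_restrict_equiv_sections_ran (F : C ⥤ D) (X' : Dᵒᵖ ⥤ Type u)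
    (A : (F.op ⋙ X').Elements ⥤ Type u) :
    Nonempty (Sect A ≃
      {t : ∀ v : X'.Elements, FdagSet F X' A v //
        ∀ (v v' : X'.Elements) (w : v ⟶ v') (Γ : C) (δ' : F.obj Γ ⟶ v'.1.unop),
          (t v').1 Γ δ' =
            A.map (eqToHom (by
              rw [show X'.map (δ' ≫ w.1.unop).op v.2 = X'.map δ'.op v'.2 from by
                rw [op_comp, Quiver.Hom.op_unop, FunctorToTypes.map_comp_apply, w.2]]))
              ((t v).1 Γ (δ' ≫ w.1.unop))}) := by
  -- the object equality used in invFun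
  have he : ∀ e : (F.op ⋙ X').Elements,
      ((F.op ⋙ X').elementsMk (op e.1.unop) (X'.map (𝟙 (F.obj e.1.unop)).op e.2)) = e := by
    intro e
    refine Functor.Elements.ext _ _ rfl ?_
    simp
  refine ⟨{
    toFun := fun s => ⟨fun v => ⟨fun Γ δ' =>
        s.1 ((F.op ⋙ X').elementsMk (op Γ) (X'.map δ'.op v.2)),
        fun Γ Δ σ δ' => s.2 _ _ _⟩,
      fun v v' w Γ δ' => (s.2 _ _ (eqToHom (by
        rw [show X'.map (δ' ≫ w.1.unop).op v.2 = X'.map δ'.op v'.2 from by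
          rw [op_comp, Quiver.Hom.op_unop, FunctorToTypes.map_comp_apply, w.2]]))).symm⟩
    invFun := fun t => ⟨fun e =>
        A.map (eqToHom (he e)) ((t.1 ⟨op (F.obj e.1.unop), e.2⟩).1 e.1.unop (𝟙 _)), ?_⟩
    left_inv := ?_
    right_inv := ?_ }⟩
  · -- naturality of invFun
    rename_i t
    intro e e' f
    dsimp only
    have h1 := t.2 (X'.elementsMk (op (F.obj e.1.unop)) e.2)
      (X'.elementsMk (op (F.obj e'.1.unop)) e'.2) ⟨(F.map f.1.unop).op, f.2⟩ e'.1.unop (𝟙 _)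
    have h2 := (t.1 ⟨op (F.obj e.1.unop), e.2⟩).2 e'.1.unop e.1.unop f.1.unop (𝟙 _)
    dsimp only [Quiver.Hom.unop_op] at h1
    rw [h1, alpha_cong F X' A (t.1 ⟨op (F.obj e.1.unop), e.2⟩)
        (show F.map f.1.unop ≫ 𝟙 _ = 𝟙 _ ≫ F.map f.1.unop by simp), ← h2]
    simp only [map_map]
    apply map_congr'
    ext
    simp [elements_eqToHom_val]
  · intro s
    refine Subtype.ext (funext fun e => ?_)
    exact s.2 _ _ (eqToHom (he e))
  · intro t
    refine Subtype.ext (funext fun v => Subtype.ext (funext fun Γ => funext fun δ' => ?_))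
    have h1 := t.2 v (X'.elementsMk (op (F.obj Γ)) (X'.map δ'.op v.2)) ⟨δ'.op, rfl⟩ Γ (𝟙 _)
    dsimp only [Quiver.Hom.unop_op] at h1
    show A.map (eqToHom _) _ = _
    rw [h1, alpha_cong F X' A (t.1 v) (show δ' = 𝟙 _ ≫ δ' by simp)]
    simp only [map_map]
    rw [map_congr' A (g := 𝟙 _) (by ext; simp [elements_eqToHom_val])]
    simp
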